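/- Consider a formal power series in q with coefficients formal Laurent series in p of the form F(p,q) = (1 + Σ_{j≥1} a_{0j} p^j) + q·(Σ_{j≥−1} a_{1j} p^j) + q²·(Σ_{j≥−2} a_{2j} p^j) + ⋯, i.e. the q^i-coefficient is a Laurent series in p with pole order at most i and the q^0-coefficient has constant term 1. Then for each n ≥ 0 there exists a polynomial P_n(k) of degree at most 2n such that for all k ≥ 0, the coefficient of p^0 q^n in F(p,q)^k equals P_n(k). -/

import Mathlib

open Finset

/-- The coefficient of `p^j` as an additive monoid hom on Laurent series. -/
noncomputable def lcoeff (j : ℤ) : LaurentSeries ℚ →+ ℚ where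
  toFun x := x.coeff j
  map_zero' := rfl
  map_add' _ _ := rfl

@[simp] lemma lcoeff_apply (j : ℤ) (x : LaurentSeries ℚ) : lcoeff j x = x.coeff j := rfl

/-- The coefficient of `p^0 q^n` as an additive monoid hom. -/
noncomputable def coeff00 (n : ℕ) : PowerSeries (LaurentSeries ℚ) →+ ℚ :=
  (lcoeff 0).comp (PowerSeries.coeff (R := LaurentSeries ℚ) n).toAddMonoidHom

@[simp] lemma coeff00_apply (n : ℕ) (x : PowerSeries (LaurentSeries ℚ)) :
    coeff00 n x = (PowerSeries.coeff (R := LaurentSeries ℚ) n x).coeff 0 := rfl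

lemma pow_supp (G : PowerSeries (LaurentSeries ℚ))
    (hG : ∀ (i : ℕ) (j : ℤ), j < 1 - 2*(i:ℤ) → (PowerSeries.coeff i G).coeff j = 0) :
    ∀ (m n : ℕ) (j : ℤ), j < (m:ℤ) - 2*n → (PowerSeries.coeff n (G^m)).coeff j = 0 := by
  intro m
  induction m with
  | zero =>
    intro n j hj
    rw [pow_zero, PowerSeries.coeff_one]
    by_cases h : n = 0
    · subst h
      rw [if_pos rfl, HahnSeries.coeff_one, if_neg (by push_cast at hj; omega)]
    · rw [if_neg h, HahnSeries.coeff_zero]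
  | succ m ih =>
    intro n j hj
    rw [pow_succ', PowerSeries.coeff_mul]
    rw [show ((∑ p ∈ antidiagonal n, PowerSeries.coeff p.1 G * PowerSeries.coeff p.2 (G^m)).coeff j)
      = ∑ p ∈ antidiagonal n, (PowerSeries.coeff p.1 G * PowerSeries.coeff p.2 (G^m)).coeff j from by
        rw [← lcoeff_apply, map_sum]; rfl]
    apply Finset.sum_eq_zero
    rintro ⟨a, b⟩ hab
    rw [Finset.HasAntidiagonal.mem_antidiagonal] at hab
    rw [HahnSeries.coeff_mul]
    apply Finset.sum_eq_zero
    rintro ⟨c, d⟩ hcd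
    rw [Finset.mem_addAntidiagonal] at hcd
    obtain ⟨hc, hd, hsum⟩ := hcd
    rw [HahnSeries.mem_support] at hc hd
    have h1 : ¬ (c < 1 - 2*(a:ℤ)) := fun h => hc (hG a c h)
    have h2 : ¬ (d < (m:ℤ) - 2*b) := fun h => hd (ih b d h)
    exfalso
    have : a + b = n := hab
    push_cast [← this] at hj
    omega

theorem stmt_8 (F : PowerSeries (LaurentSeries ℚ))
    (hsupp : ∀ (i : ℕ) (j : ℤ), j < -(i : ℤ) →
      (PowerSeries.coeff (R := LaurentSeries ℚ) i F).coeff j = 0)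
    (hconst : (PowerSeries.coeff (R := LaurentSeries ℚ) 0 F).coeff 0 = 1) :
    ∀ n : ℕ, ∃ P : Polynomial ℚ, P.natDegree ≤ 2 * n ∧
      ∀ k : ℕ, (PowerSeries.coeff (R := LaurentSeries ℚ) n (F ^ k)).coeff 0 =
        Polynomial.eval (k : ℚ) P := by
  intro n
  set G : PowerSeries (LaurentSeries ℚ) := F - 1 with hGdef
  have hG : ∀ (i : ℕ) (j : ℤ), j < 1 - 2*(i:ℤ) → (PowerSeries.coeff i G).coeff j = 0 := by
    intro i j hj
    rw [hGdef, map_sub, HahnSeries.coeff_sub, PowerSeries.coeff_one]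
    by_cases h : i = 0
    · subst h
      rw [if_pos rfl, HahnSeries.coeff_one]
      rcases lt_or_eq_of_le (show j ≤ 0 by push_cast at hj; omega) with h0 | h0
      · rw [hsupp 0 j (by simpa using h0), if_neg (by omega)]; ring
      · subst h0; rw [hconst, if_pos rfl]; ring
    · rw [if_neg h, hsupp i j (by omega)]
      simp
  have key := pow_supp G hG
  set c : ℕ → ℚ := fun m => coeff00 n (G ^ m) with hc
  have hczero : ∀ m, 2 * n < m → c m = 0 := by
    intro m hm
    exact key m n 0 (by omega)
  refine ⟨∑ m ∈ range (2*n+1), Polynomial.C (c m / m.factorial) * descPochhammer ℚ m, ?_, ?_⟩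
  · apply Polynomial.natDegree_sum_le_of_forall_le
    intro m hm
    rw [Finset.mem_range] at hm
    calc (Polynomial.C (c m / m.factorial) * descPochhammer ℚ m).natDegree
        ≤ (descPochhammer ℚ m).natDegree := Polynomial.natDegree_C_mul_le _ _
      _ = m := descPochhammer_natDegree (R := ℚ) m
      _ ≤ 2*n := by omega
  · intro k
    have hF : F = G + 1 := by rw [hGdef]; ring
    have expand : F ^ k = ∑ m ∈ range (k+1), G ^ m * 1 ^ (k - m) * (k.choose m : PowerSeries (LaurentSeries ℚ)) := by
      rw [hF, add_pow]
    have lhs : (PowerSeries.coeff (R := LaurentSeries ℚ) n (F ^ k)).coeff 0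
        = ∑ m ∈ range (k+1), (k.choose m : ℚ) * c m := by
      rw [← coeff00_apply, expand, map_sum]
      apply Finset.sum_congr rfl
      intro m _
      rw [one_pow, mul_one]
      have h1 : G ^ m * (k.choose m : PowerSeries (LaurentSeries ℚ)) = (k.choose m) • G ^ m := by
        rw [nsmul_eq_mul, mul_comm]
      rw [h1, map_nsmul, hc, nsmul_eq_mul]
    rw [lhs]
    have step : ∑ m ∈ range (k+1), (k.choose m : ℚ) * c m
        = ∑ m ∈ range (2*n+1), (k.choose m : ℚ) * c m := by
      have h1 : ∑ m ∈ range (k+1), (k.choose m : ℚ) * c m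
          = ∑ m ∈ range (max (k+1) (2*n+1)), (k.choose m : ℚ) * c m := by
        apply Finset.sum_subset (Finset.range_subset_range.2 (le_max_left _ _))
        intro m _ hm
        rw [Finset.mem_range, not_lt] at hm
        rw [Nat.choose_eq_zero_of_lt (by omega)]
        simp
      have h2 : ∑ m ∈ range (2*n+1), (k.choose m : ℚ) * c m
          = ∑ m ∈ range (max (k+1) (2*n+1)), (k.choose m : ℚ) * c m := by
        apply Finset.sum_subset (Finset.range_subset_range.2 (le_max_right _ _))
        intro m _ hm
        rw [Finset.mem_range, not_lt] at hm
        rw [hczero m (by omega)]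
        ring
      rw [h1, ← h2]
    rw [step, Polynomial.eval_finset_sum]
    apply Finset.sum_congr rfl
    intro m _
    rw [Polynomial.eval_mul, Polynomial.eval_C, descPochhammer_eval_eq_descFactorial,
      Nat.descFactorial_eq_factorial_mul_choose]
    have hfac : (m.factorial : ℚ) ≠ 0 := by exact_mod_cast m.factorial_ne_zero
    push_cast
    field_simp
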